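/- Suppose G : ℝ → ℝ is a C² function satisfying -G''(x) + U''(H_{0,1}(x)) G(x) = [U''(H_{0,1}(x)) - 2] e^{-√2 x} + 8√2 H'_{0,1}(x), with G and G' of at most polynomial-times-exponential decay so that all integrals converge and boundary terms vanish. Then ∫_ℝ U'''(H_{0,1}(x)) H'_{0,1}(x)² G(x) dx = -∫_ℝ U'(H_{0,1}(x)) [U''(H_{0,1}(x)) - 2] e^{-√2 x} dx, where U(φ) = φ²(1-φ²)². -/

import Mathlib

open Real MeasureTheory Filter

set_option maxHeartbeats 1000000

noncomputable def U (φ : ℝ) : ℝ := φ ^ 2 * (1 - φ ^ 2) ^ 2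

noncomputable def H (x : ℝ) : ℝ :=
  Real.exp (Real.sqrt 2 * x) / Real.sqrt (1 + Real.exp (2 * Real.sqrt 2 * x))

lemma s_pos : (0:ℝ) < Real.sqrt 2 := by positivity

lemma s_sq : Real.sqrt 2 ^ 2 = 2 := Real.sq_sqrt (by norm_num)

lemma hasDerivAt_U (φ : ℝ) : HasDerivAt U (2*φ - 8*φ^3 + 6*φ^5) φ := by
  have h := (hasDerivAt_pow 2 φ).mul (((hasDerivAt_pow 2 φ).const_sub 1).pow 2)
  refine h.congr_deriv (Eq.symm ?_)
  simp
  ring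

lemma deriv_U : deriv U = fun φ => 2*φ - 8*φ^3 + 6*φ^5 :=
  funext fun φ => (hasDerivAt_U φ).deriv

lemma deriv2_U : deriv (deriv U) = fun φ => 2 - 24*φ^2 + 30*φ^4 := by
  rw [deriv_U]
  funext φ
  have h : HasDerivAt (fun φ:ℝ => 2*φ - 8*φ^3 + 6*φ^5) (2 - 24*φ^2 + 30*φ^4) φ := by
    have h2 := ((hasDerivAt_id φ).const_mul 2).sub ((hasDerivAt_pow 3 φ).const_mul 8)
    have h3 := h2.add ((hasDerivAt_pow 5 φ).const_mul 6)
    refine h3.congr_deriv (Eq.symm ?_)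
    simp
    ring
  exact h.deriv

lemma deriv3_U : deriv (deriv (deriv U)) = fun φ => -48*φ + 120*φ^3 := by
  rw [deriv2_U]
  funext φ
  have h : HasDerivAt (fun φ:ℝ => 2 - 24*φ^2 + 30*φ^4) (-48*φ + 120*φ^3) φ := by
    have h2 := (((hasDerivAt_pow 2 φ).const_mul 24).const_sub 2).add
      ((hasDerivAt_pow 4 φ).const_mul 30)
    refine h2.congr_deriv (Eq.symm ?_)
    simp
    ring
  exact h.deriv


lemma exp2s (x : ℝ) : Real.exp (2 * Real.sqrt 2 * x) = Real.exp (Real.sqrt 2 * x) ^ 2 := by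
  rw [show 2 * Real.sqrt 2 * x = Real.sqrt 2 * x + Real.sqrt 2 * x by ring, Real.exp_add, sq]

lemma inner_pos (x : ℝ) : (0:ℝ) < 1 + Real.exp (2 * Real.sqrt 2 * x) := by positivity

lemma D_pos (x : ℝ) : (0:ℝ) < Real.sqrt (1 + Real.exp (2 * Real.sqrt 2 * x)) :=
  Real.sqrt_pos.mpr (inner_pos x)

lemma hasDerivAt_H (x : ℝ) : HasDerivAt H (Real.sqrt 2 * H x * (1 - H x ^ 2)) x := by
  have hE : HasDerivAt (fun x : ℝ => Real.exp (Real.sqrt 2 * x))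
      (Real.exp (Real.sqrt 2 * x) * Real.sqrt 2) x := by
    simpa using ((hasDerivAt_id x).const_mul (Real.sqrt 2)).exp
  have hI : HasDerivAt (fun x : ℝ => 1 + Real.exp (2 * Real.sqrt 2 * x))
      (Real.exp (2 * Real.sqrt 2 * x) * (2 * Real.sqrt 2)) x := by
    simpa using (((hasDerivAt_id x).const_mul (2 * Real.sqrt 2)).exp).const_add 1
  have hD : HasDerivAt (fun x : ℝ => Real.sqrt (1 + Real.exp (2 * Real.sqrt 2 * x)))
      (Real.exp (2 * Real.sqrt 2 * x) * (2 * Real.sqrt 2) /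
        (2 * Real.sqrt (1 + Real.exp (2 * Real.sqrt 2 * x)))) x :=
    hI.sqrt (ne_of_gt (inner_pos x))
  have h := hE.div hD (ne_of_gt (D_pos x))
  refine h.congr_deriv (Eq.symm ?_)
  unfold H
  have hd := (D_pos x).ne'
  field_simp
  rw [show Real.sqrt 2 * x * 2 = 2 * Real.sqrt 2 * x by ring, exp2s]

lemma deriv_H : deriv H = fun x => Real.sqrt 2 * H x * (1 - H x ^ 2) :=
  funext fun x => (hasDerivAt_H x).deriv

lemma one_sub_H_sq (x : ℝ) : 1 - H x ^ 2 = 1 / (1 + Real.exp (2 * Real.sqrt 2 * x)) := by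
  unfold H
  rw [div_pow, Real.sq_sqrt (inner_pos x).le, exp2s]
  field_simp
  ring

lemma H_pos (x : ℝ) : 0 < H x := div_pos (Real.exp_pos _) (D_pos x)

lemma H_lt_one (x : ℝ) : H x < 1 := by
  nlinarith [one_sub_H_sq x, inner_pos x, H_pos x,
    one_div_pos.mpr (inner_pos x)]

lemma hasDerivAt_derivH (x : ℝ) :
    HasDerivAt (deriv H) (Real.sqrt 2 * (1 - 3 * H x ^ 2) * deriv H x) x := by
  rw [deriv_H]
  have h := (((hasDerivAt_H x).const_mul (Real.sqrt 2)).mul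
    (((hasDerivAt_H x).pow 2).const_sub 1))
  refine h.congr_deriv (Eq.symm ?_)
  simp only [Nat.cast_ofNat, pow_one, Pi.pow_apply]
  ring

lemma deriv2_H : deriv (deriv H)
    = fun x => Real.sqrt 2 * (1 - 3 * H x ^ 2) * deriv H x :=
  funext fun x => (hasDerivAt_derivH x).deriv

lemma hasDerivAt_deriv2H (x : ℝ) :
    HasDerivAt (deriv (deriv H))
      (Real.sqrt 2 * (-6 * H x * deriv H x) * deriv H x
        + Real.sqrt 2 * (1 - 3 * H x ^ 2) * (Real.sqrt 2 * (1 - 3 * H x ^ 2) * deriv H x)) x := by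
  rw [deriv2_H]
  have h := ((((hasDerivAt_H x).pow 2).const_mul 3).const_sub 1).const_mul (Real.sqrt 2)
    |>.mul (hasDerivAt_derivH x)
  refine h.congr_deriv (Eq.symm ?_)
  simp only [Nat.cast_ofNat, pow_one, deriv_H, Pi.pow_apply]
  ring

lemma derivH_pos (x : ℝ) : 0 < deriv H x := by
  rw [deriv_H]
  have h1 := H_pos x
  have h2 := H_lt_one x
  have : 0 < 1 - H x ^ 2 := by nlinarith
  positivity

lemma Phi_hasDerivAt (G : ℝ → ℝ) (hG : ContDiff ℝ 2 G)
    (hode : ∀ x : ℝ,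
      -(deriv (deriv G) x) + deriv (deriv U) (H x) * G x =
        (deriv (deriv U) (H x) - 2) * Real.exp (-(Real.sqrt 2) * x) +
          8 * Real.sqrt 2 * deriv H x) (x : ℝ) :
    HasDerivAt (fun y => -(Real.sqrt 2 * (1 - 3 * H y ^ 2) *
        (deriv H y * deriv G y - deriv (deriv H) y * G y))
        - 6 * Real.sqrt 2 * H y * (deriv H y) ^ 2 * G y
        - 4 * Real.sqrt 2 * (deriv H y) ^ 2)
      (deriv (deriv (deriv U)) (H x) * (deriv H x) ^ 2 * G x
        + deriv U (H x) * (deriv (deriv U) (H x) - 2) * Real.exp (-(Real.sqrt 2) * x)) x := by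
  have hGdiff : Differentiable ℝ G := hG.differentiable (by norm_num)
  have hG1 : ContDiff ℝ 1 (deriv G) := (contDiff_succ_iff_deriv.mp
    (show ContDiff ℝ (1 + 1) G from by norm_num; exact hG)).2.2
  have hGd : HasDerivAt G (deriv G x) x := (hGdiff x).hasDerivAt
  have hGd2 : HasDerivAt (deriv G) (deriv (deriv G) x) x :=
    ((hG1.differentiable one_ne_zero) x).hasDerivAt
  have hA : HasDerivAt (fun y => Real.sqrt 2 * (1 - 3 * H y ^ 2))
      (Real.sqrt 2 * -(3 * (2 * H x ^ 1 * (Real.sqrt 2 * H x * (1 - H x ^ 2))))) x := by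
    simpa using ((((hasDerivAt_H x).pow 2).const_mul 3).const_sub 1).const_mul (Real.sqrt 2)
  have hF1 : HasDerivAt (fun y => deriv H y * deriv G y - deriv (deriv H) y * G y)
      ((Real.sqrt 2 * (1 - 3 * H x ^ 2) * deriv H x) * deriv G x
        + deriv H x * deriv (deriv G) x
        - ((Real.sqrt 2 * (-6 * H x * deriv H x) * deriv H x
          + Real.sqrt 2 * (1 - 3 * H x ^ 2) * (Real.sqrt 2 * (1 - 3 * H x ^ 2) * deriv H x)) * G x
          + deriv (deriv H) x * deriv G x)) x :=
    ((hasDerivAt_derivH x).mul hGd2).sub ((hasDerivAt_deriv2H x).mul hGd)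
  have hT1 := (hA.mul hF1).neg
  have hT2 := ((((hasDerivAt_H x).const_mul (6 * Real.sqrt 2)).mul
    ((hasDerivAt_derivH x).pow 2)).mul hGd)
  have hT3 := ((hasDerivAt_derivH x).pow 2).const_mul (4 * Real.sqrt 2)
  have hbig := (hT1.sub hT2).sub hT3
  have harr : (fun y => -(Real.sqrt 2 * (1 - 3 * H y ^ 2) *
        (deriv H y * deriv G y - deriv (deriv H) y * G y))
        - 6 * Real.sqrt 2 * H y * (deriv H y) ^ 2 * G y
        - 4 * Real.sqrt 2 * (deriv H y) ^ 2)
      = (fun y => (-(Real.sqrt 2 * (1 - 3 * H y ^ 2) *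
          (deriv H y * deriv G y - deriv (deriv H) y * G y))
        - 6 * Real.sqrt 2 * H y * (deriv H y) ^ 2 * G y)
        - 4 * Real.sqrt 2 * (deriv H y) ^ 2) := by
    funext y; ring
  rw [harr]
  refine hbig.congr_deriv (Eq.symm ?_)
  have hode' := hode x
  simp only [deriv2_U] at hode'
  have hgpp : deriv (deriv G) x = (2 - 24 * H x ^ 2 + 30 * H x ^ 4) * G x
      - ((2 - 24 * H x ^ 2 + 30 * H x ^ 4) - 2) * Real.exp (-(Real.sqrt 2) * x)
      - 8 * Real.sqrt 2 * deriv H x := by linarith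
  simp only [deriv3_U]
  simp only [deriv2_U]
  simp only [deriv_U]
  simp only [deriv2_H]
  simp only [hgpp]
  simp only [deriv_H]
  simp only [pow_one, Nat.cast_ofNat, Pi.pow_apply, Pi.mul_apply]
  set s := Real.sqrt 2
  set h := H x
  set g := G x
  set e := Real.exp (-s * x)
  linear_combination (-(-24*h^3*e + 126*h^5*e - 192*h^7*e + 90*h^9*e + s^2*h*g
    - 40*s^2*h^3*g + 174*s^2*h^5*g - 240*s^2*h^7*g + 105*s^2*h^9*g)) * s_sq

lemma D_ge_one (x : ℝ) : 1 ≤ Real.sqrt (1 + Real.exp (2 * Real.sqrt 2 * x)) := by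
  have h : (1:ℝ) ≤ 1 + Real.exp (2 * Real.sqrt 2 * x) := by
    linarith [Real.exp_pos (2 * Real.sqrt 2 * x)]
  have := Real.sqrt_le_sqrt h
  simpa using this

lemma H_le_exp (x : ℝ) : H x ≤ Real.exp (Real.sqrt 2 * x) := by
  unfold H
  calc Real.exp (Real.sqrt 2 * x) / Real.sqrt (1 + Real.exp (2 * Real.sqrt 2 * x))
      ≤ Real.exp (Real.sqrt 2 * x) / 1 :=
        div_le_div_of_nonneg_left (Real.exp_pos _).le one_pos (D_ge_one x)
    _ = Real.exp (Real.sqrt 2 * x) := by ring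

lemma one_sub_H_sq_pos (x : ℝ) : 0 < 1 - H x ^ 2 := by
  rw [one_sub_H_sq x]
  positivity

lemma one_sub_H_sq_le_one (x : ℝ) : 1 - H x ^ 2 ≤ 1 := by
  nlinarith [H_pos x]

lemma one_sub_H_sq_le_exp (x : ℝ) : 1 - H x ^ 2 ≤ Real.exp (-(2 * Real.sqrt 2) * x) := by
  rw [one_sub_H_sq x, div_le_iff₀ (inner_pos x)]
  have h : Real.exp (-(2 * Real.sqrt 2) * x) * Real.exp (2 * Real.sqrt 2 * x) = 1 := by
    rw [← Real.exp_add]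
    rw [show -(2 * Real.sqrt 2) * x + 2 * Real.sqrt 2 * x = 0 by ring, Real.exp_zero]
  nlinarith [Real.exp_pos (-(2 * Real.sqrt 2) * x)]

lemma p_ub_bot (x : ℝ) : deriv H x ≤ Real.sqrt 2 * Real.exp (Real.sqrt 2 * x) := by
  rw [deriv_H]
  dsimp only
  calc Real.sqrt 2 * H x * (1 - H x ^ 2) ≤ Real.sqrt 2 * H x := by
        nlinarith [mul_pos s_pos (H_pos x), one_sub_H_sq_le_one x, one_sub_H_sq_pos x]
    _ ≤ Real.sqrt 2 * Real.exp (Real.sqrt 2 * x) := by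
        nlinarith [H_le_exp x, s_pos]

lemma p_ub_top (x : ℝ) : deriv H x ≤ Real.sqrt 2 * Real.exp (-(2 * Real.sqrt 2) * x) := by
  rw [deriv_H]
  dsimp only
  calc Real.sqrt 2 * H x * (1 - H x ^ 2) ≤ Real.sqrt 2 * (1 - H x ^ 2) := by
        nlinarith [mul_nonneg (mul_pos s_pos (one_sub_H_sq_pos x)).le
          (sub_nonneg.mpr (H_lt_one x).le)]
    _ ≤ Real.sqrt 2 * Real.exp (-(2 * Real.sqrt 2) * x) := by
        nlinarith [one_sub_H_sq_le_exp x, s_pos]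

lemma p_lb_top (x : ℝ) (hx : 0 ≤ x) :
    Real.exp (-(2 * Real.sqrt 2) * x) / 2 ≤ deriv H x := by
  rw [deriv_H]
  have hE1 : (1:ℝ) ≤ Real.exp (2 * Real.sqrt 2 * x) := by
    rw [show (1:ℝ) = Real.exp 0 by simp]
    exact Real.exp_le_exp.mpr (by positivity)
  have hEe : Real.exp (-(2 * Real.sqrt 2) * x) * Real.exp (2 * Real.sqrt 2 * x) = 1 := by
    rw [← Real.exp_add, show -(2 * Real.sqrt 2) * x + 2 * Real.sqrt 2 * x = 0 by ring,
      Real.exp_zero]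
  have hA : 1 - H x ^ 2 = 1 / (1 + Real.exp (2 * Real.sqrt 2 * x)) := one_sub_H_sq x
  have hH2 : (1:ℝ)/2 ≤ H x ^ 2 := by
    have hp := inner_pos x
    rw [show H x ^ 2 = 1 - (1 - H x ^ 2) by ring, hA]
    have hle : 1 / (1 + Real.exp (2 * Real.sqrt 2 * x)) ≤ 1/2 := by
      rw [div_le_div_iff₀ hp two_pos]
      linarith
    linarith
  have h1 : 1 ≤ Real.sqrt 2 * H x := by
    nlinarith [H_pos x, s_pos, s_sq]
  have h2 : Real.exp (-(2 * Real.sqrt 2) * x) / 2 ≤ 1 - H x ^ 2 := by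
    rw [hA]
    rw [div_le_div_iff₀ two_pos (inner_pos x)]
    nlinarith [Real.exp_pos (-(2 * Real.sqrt 2) * x)]
  nlinarith [one_sub_H_sq_pos x, Real.exp_pos (-(2 * Real.sqrt 2) * x)]

lemma p_lb_bot (x : ℝ) (hx : x ≤ 0) :
    Real.exp (Real.sqrt 2 * x) / 2 ≤ deriv H x := by
  rw [deriv_H]
  have hE1 : Real.exp (2 * Real.sqrt 2 * x) ≤ 1 := by
    rw [show (1:ℝ) = Real.exp 0 by simp]
    apply Real.exp_le_exp.mpr
    have := s_pos
    nlinarith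
  have hD_le : Real.sqrt (1 + Real.exp (2 * Real.sqrt 2 * x)) ≤ Real.sqrt 2 := by
    exact Real.sqrt_le_sqrt (by linarith)
  have hH_ge : Real.exp (Real.sqrt 2 * x) / Real.sqrt 2 ≤ H x := by
    unfold H
    exact div_le_div_of_nonneg_left (Real.exp_pos _).le (D_pos x) hD_le
  have hA : (1:ℝ)/2 ≤ 1 - H x ^ 2 := by
    rw [one_sub_H_sq x]
    rw [div_le_div_iff₀ two_pos (inner_pos x)]
    linarith
  have h1 : Real.exp (Real.sqrt 2 * x) ≤ Real.sqrt 2 * H x := by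
    rw [div_le_iff₀ s_pos] at hH_ge
    nlinarith [s_pos, s_sq]
  nlinarith [Real.exp_pos (Real.sqrt 2 * x), H_pos x, s_pos, one_sub_H_sq_pos x]

lemma tendsto_p_top : Tendsto (deriv H) atTop (nhds 0) := by
  apply squeeze_zero (fun x => (derivH_pos x).le) (fun x => p_ub_top x)
  have h1 : Tendsto (fun x : ℝ => (2 * Real.sqrt 2) * x) atTop atTop :=
    Tendsto.const_mul_atTop (by positivity) tendsto_id
  have h2 := (Real.tendsto_exp_neg_atTop_nhds_zero).comp h1
  have h4 : Tendsto (fun x : ℝ => Real.exp (-(2 * Real.sqrt 2) * x)) atTop (nhds 0) := by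
    have : (fun x : ℝ => Real.exp (-(2 * Real.sqrt 2) * x))
        = (fun x : ℝ => Real.exp (-x)) ∘ (fun x : ℝ => 2 * Real.sqrt 2 * x) := by
      funext x; simp [Function.comp]
    rw [this]; exact h2
  simpa using h4.const_mul (Real.sqrt 2)

lemma tendsto_p_bot : Tendsto (deriv H) atBot (nhds 0) := by
  apply squeeze_zero (fun x => (derivH_pos x).le) (fun x => p_ub_bot x)
  have h1 : Tendsto (fun x : ℝ => Real.sqrt 2 * x) atBot atBot :=
    Tendsto.const_mul_atBot s_pos tendsto_id
  have h2 := Real.tendsto_exp_atBot.comp h1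
  have h4 : Tendsto (fun x : ℝ => Real.exp (Real.sqrt 2 * x)) atBot (nhds 0) := h2
  simpa using h4.const_mul (Real.sqrt 2)

lemma cont_H : Continuous H :=
  Differentiable.continuous (fun x => (hasDerivAt_H x).differentiableAt)

lemma cont_derivH : Continuous (deriv H) :=
  Differentiable.continuous (fun x => (hasDerivAt_derivH x).differentiableAt)

lemma cont_deriv2H : Continuous (deriv (deriv H)) := by
  rw [deriv2_H]
  exact (continuous_const.mul ((continuous_const.sub
    (continuous_const.mul (cont_H.pow 2))))).mul cont_derivH

lemma w_hasDerivAt (G : ℝ → ℝ) (hGdiff : Differentiable ℝ G) (t : ℝ) :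
    HasDerivAt (fun y => G y / deriv H y)
      ((deriv H t * deriv G t - deriv (deriv H) t * G t) / (deriv H t) ^ 2) t := by
  have h := ((hGdiff t).hasDerivAt).div (hasDerivAt_derivH t) (derivH_pos t).ne'
  refine h.congr_deriv (Eq.symm ?_)
  simp only [deriv2_H]
  ring

lemma key_top (G : ℝ → ℝ) (hG : ContDiff ℝ 2 G)
    (hbd : Tendsto (fun x => deriv H x * deriv G x - deriv (deriv H) x * G x)
      atTop (nhds 0)) :
    Tendsto (fun x => (deriv H x) ^ 2 * G x) atTop (nhds 0) := by
  have hGdiff : Differentiable ℝ G := hG.differentiable (by norm_num)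
  have hG1 : ContDiff ℝ 1 (deriv G) := (contDiff_succ_iff_deriv.mp
    (show ContDiff ℝ (1 + 1) G from by norm_num; exact hG)).2.2
  set F1 : ℝ → ℝ := fun t => deriv H t * deriv G t - deriv (deriv H) t * G t with hF1def
  have hcontF1 : Continuous F1 :=
    (cont_derivH.mul (hG1.continuous)).sub (cont_deriv2H.mul hGdiff.continuous)
  set w : ℝ → ℝ := fun y => G y / deriv H y with hwdef
  have hw : ∀ t, HasDerivAt w (F1 t / (deriv H t) ^ 2) t := fun t =>
    w_hasDerivAt G hGdiff t
  rw [Metric.tendsto_atTop] at hbd ⊢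
  intro ε hε
  obtain ⟨N₀, hN₀⟩ := hbd (ε/8) (by positivity)
  set x₀ := max N₀ 0 with hx₀def
  have hx₀ : (0:ℝ) ≤ x₀ := le_max_right _ _
  have hsmall : ∀ t, x₀ ≤ t → |F1 t| ≤ ε/8 := by
    intro t ht
    have h := hN₀ t (le_trans (le_max_left _ _) ht)
    rw [Real.dist_eq, sub_zero] at h
    exact h.le
  set C := |w x₀| with hCdef
  have hwbound : ∀ x, x₀ ≤ x → |w x| ≤ C + ε/8/Real.sqrt 2 * Real.exp (4*Real.sqrt 2*x) := by
    intro x hx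
    have hcont_integrand : Continuous (fun t => F1 t / (deriv H t) ^ 2) :=
      hcontF1.div (cont_derivH.pow 2) (fun t => pow_ne_zero 2 (derivH_pos t).ne')
    have hftc : w x - w x₀ = ∫ t in x₀..x, F1 t / (deriv H t) ^ 2 :=
      (intervalIntegral.integral_eq_sub_of_hasDerivAt (fun t _ => hw t)
        (hcont_integrand.intervalIntegrable _ _)).symm
    have hbound : ‖∫ t in x₀..x, F1 t / (deriv H t) ^ 2‖
        ≤ |∫ t in x₀..x, ε/8 * (4 * Real.exp (4*Real.sqrt 2*t))| := by
      apply intervalIntegral.norm_integral_le_abs_of_norm_le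
      · filter_upwards [ae_restrict_mem measurableSet_uIoc] with t ht
        rw [Set.uIoc_of_le hx] at ht
        have ht0 : (0:ℝ) ≤ t := le_trans hx₀ ht.1.le
        have hp := p_lb_top t ht0
        have hq : (0:ℝ) < Real.exp (-(2 * Real.sqrt 2) * t) := Real.exp_pos _
        have hqq : Real.exp (4*Real.sqrt 2*t) * Real.exp (-(2 * Real.sqrt 2) * t) ^ 2 = 1 := by
          rw [sq, ← Real.exp_add, ← Real.exp_add,
            show 4*Real.sqrt 2*t + (-(2 * Real.sqrt 2) * t + -(2 * Real.sqrt 2) * t) = 0 by ring,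
            Real.exp_zero]
        have hF1t := hsmall t ht.1.le
        have hppos := derivH_pos t
        rw [Real.norm_eq_abs, abs_div, abs_of_pos (pow_pos hppos 2), div_le_iff₀ (pow_pos hppos 2)]
        have hp2 : Real.exp (-(2 * Real.sqrt 2) * t) ^ 2 / 4 ≤ (deriv H t) ^ 2 := by
          nlinarith
        nlinarith [abs_nonneg (F1 t), Real.exp_pos (4*Real.sqrt 2*t), mul_le_mul_of_nonneg_left hp2
          (show (0:ℝ) ≤ ε/8 * (4 * Real.exp (4*Real.sqrt 2*t)) by positivity)]
      · exact (continuous_const.mul (continuous_const.mul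
          ((continuous_const.mul continuous_id).rexp))).intervalIntegrable _ _
    have hev : ∫ t in x₀..x, ε/8 * (4 * Real.exp (4*Real.sqrt 2*t))
        = ε/8/Real.sqrt 2 * Real.exp (4*Real.sqrt 2*x)
          - ε/8/Real.sqrt 2 * Real.exp (4*Real.sqrt 2*x₀) := by
      have hAder : ∀ t : ℝ, HasDerivAt (fun t => ε/8/Real.sqrt 2 * Real.exp (4*Real.sqrt 2*t))
          (ε/8 * (4 * Real.exp (4*Real.sqrt 2*t))) t := by
        intro t
        have h := (((hasDerivAt_id t).const_mul (4*Real.sqrt 2)).exp).const_mul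
          (ε/8/Real.sqrt 2)
        refine h.congr_deriv (Eq.symm ?_)
        simp only [id_eq]
        have h2 := s_sq
        field_simp
      rw [intervalIntegral.integral_eq_sub_of_hasDerivAt (fun t _ => hAder t)
        ((continuous_const.mul (continuous_const.mul
          ((continuous_const.mul continuous_id).rexp))).intervalIntegrable _ _)]
    have h1 : |w x - w x₀| ≤ ε/8/Real.sqrt 2 * Real.exp (4*Real.sqrt 2*x) := by
      rw [hftc]
      calc ‖∫ t in x₀..x, F1 t / (deriv H t) ^ 2‖
          ≤ |∫ t in x₀..x, ε/8 * (4 * Real.exp (4*Real.sqrt 2*t))| := hbound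
        _ ≤ ε/8/Real.sqrt 2 * Real.exp (4*Real.sqrt 2*x) := by
            rw [hev, abs_of_nonneg]
            · have : Real.exp (4*Real.sqrt 2*x₀) > 0 := Real.exp_pos _
              have hc : (0:ℝ) ≤ ε/8/Real.sqrt 2 := by positivity
              nlinarith
            · have hle : Real.exp (4*Real.sqrt 2*x₀) ≤ Real.exp (4*Real.sqrt 2*x) :=
                Real.exp_le_exp.mpr (by nlinarith [s_pos])
              have hc : (0:ℝ) ≤ ε/8/Real.sqrt 2 := by positivity
              nlinarith
    calc |w x| ≤ |w x₀| + |w x - w x₀| := by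
          have := abs_add_le (w x₀) (w x - w x₀); simpa using this
      _ ≤ C + ε/8/Real.sqrt 2 * Real.exp (4*Real.sqrt 2*x) := by
          rw [hCdef]; linarith
  have hterm : Tendsto (fun x => 2*Real.sqrt 2*C*(Real.exp (-(2*Real.sqrt 2)*x))^3)
      atTop (nhds 0) := by
    have h1 : Tendsto (fun x : ℝ => (2 * Real.sqrt 2) * x) atTop atTop :=
      Tendsto.const_mul_atTop (by positivity) tendsto_id
    have h2 := (Real.tendsto_exp_neg_atTop_nhds_zero).comp h1
    have h4 : Tendsto (fun x : ℝ => Real.exp (-(2 * Real.sqrt 2) * x)) atTop (nhds 0) := by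
      have heq : (fun x : ℝ => Real.exp (-(2 * Real.sqrt 2) * x))
          = (fun x : ℝ => Real.exp (-x)) ∘ (fun x : ℝ => 2 * Real.sqrt 2 * x) := by
        funext x; simp [Function.comp]
      rw [heq]; exact h2
    have h5 := (h4.pow 3).const_mul (2*Real.sqrt 2*C)
    simpa using h5
  obtain ⟨N₁, hN₁⟩ := Metric.tendsto_atTop.mp hterm (ε/2) (by positivity)
  refine ⟨max N₁ x₀, fun x hx => ?_⟩
  have hx1 : N₁ ≤ x := le_trans (le_max_left _ _) hx
  have hx2 : x₀ ≤ x := le_trans (le_max_right _ _) hx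
  have hx0 : (0:ℝ) ≤ x := le_trans hx₀ hx2
  rw [Real.dist_eq, sub_zero]
  have hppos := derivH_pos x
  have hGx : G x = w x * deriv H x := by
    rw [hwdef]; field_simp
  have habs : |(deriv H x) ^ 2 * G x| = (deriv H x) ^ 3 * |w x| := by
    rw [hGx, abs_mul, abs_mul, abs_of_pos hppos, abs_of_pos (pow_pos hppos 2)]
    ring
  have hub := p_ub_top x
  have hwb := hwbound x hx2
  have hterm1 : 2*Real.sqrt 2*C*(Real.exp (-(2*Real.sqrt 2)*x))^3 < ε/2 := by
    have := hN₁ x hx1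
    rw [Real.dist_eq, sub_zero] at this
    calc 2*Real.sqrt 2*C*(Real.exp (-(2*Real.sqrt 2)*x))^3
        ≤ |2*Real.sqrt 2*C*(Real.exp (-(2*Real.sqrt 2)*x))^3| := le_abs_self _
      _ < ε/2 := this
  have hexp1 : (Real.exp (-(2*Real.sqrt 2)*x))^3 * Real.exp (4*Real.sqrt 2*x)
      = Real.exp (-(2*Real.sqrt 2)*x) := by
    rw [pow_succ, sq, ← Real.exp_add, ← Real.exp_add,
      ← Real.exp_add]
    congr 1
    ring
  have hexp2 : Real.exp (-(2*Real.sqrt 2)*x) ≤ 1 := by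
    rw [show (1:ℝ) = Real.exp 0 by simp]
    exact Real.exp_le_exp.mpr (by nlinarith [s_pos])
  have hp3 : (deriv H x) ^ 3 ≤ 2*Real.sqrt 2*(Real.exp (-(2*Real.sqrt 2)*x))^3 := by
    have h := pow_le_pow_left₀ hppos.le hub 3
    calc (deriv H x) ^ 3 ≤ (Real.sqrt 2 * Real.exp (-(2*Real.sqrt 2)*x))^3 := h
      _ = 2*Real.sqrt 2*(Real.exp (-(2*Real.sqrt 2)*x))^3 := by
          rw [mul_pow, pow_succ, s_sq]
          try ring
  have hwnonneg : (0:ℝ) ≤ |w x| := abs_nonneg _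
  have hCnonneg : (0:ℝ) ≤ C := abs_nonneg _
  calc |(deriv H x) ^ 2 * G x| = (deriv H x) ^ 3 * |w x| := habs
    _ ≤ (2*Real.sqrt 2*(Real.exp (-(2*Real.sqrt 2)*x))^3)
        * (C + ε/8/Real.sqrt 2 * Real.exp (4*Real.sqrt 2*x)) := by
        apply mul_le_mul hp3 hwb hwnonneg
        positivity
    _ = 2*Real.sqrt 2*C*(Real.exp (-(2*Real.sqrt 2)*x))^3
        + 2*Real.sqrt 2*(ε/8/Real.sqrt 2)
          * ((Real.exp (-(2*Real.sqrt 2)*x))^3 * Real.exp (4*Real.sqrt 2*x)) := by ring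
    _ = 2*Real.sqrt 2*C*(Real.exp (-(2*Real.sqrt 2)*x))^3
        + (ε/4) * Real.exp (-(2*Real.sqrt 2)*x) := by
        rw [hexp1]
        have h2 := s_sq
        field_simp
        nlinarith [Real.exp_pos (-(2*Real.sqrt 2)*x), s_pos]
    _ < ε/2 + ε/4 := by
        have : (ε/4) * Real.exp (-(2*Real.sqrt 2)*x) ≤ ε/4 * 1 := by
          apply mul_le_mul_of_nonneg_left hexp2 (by positivity)
        nlinarith
    _ < ε := by linarith

lemma key_bot (G : ℝ → ℝ) (hG : ContDiff ℝ 2 G)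
    (hbd : Tendsto (fun x => deriv H x * deriv G x - deriv (deriv H) x * G x)
      atBot (nhds 0)) :
    Tendsto (fun x => (deriv H x) ^ 2 * G x) atBot (nhds 0) := by
  have hGdiff : Differentiable ℝ G := hG.differentiable (by norm_num)
  have hG1 : ContDiff ℝ 1 (deriv G) := (contDiff_succ_iff_deriv.mp
    (show ContDiff ℝ (1 + 1) G from by norm_num; exact hG)).2.2
  set F1 : ℝ → ℝ := fun t => deriv H t * deriv G t - deriv (deriv H) t * G t with hF1def
  have hcontF1 : Continuous F1 :=
    (cont_derivH.mul (hG1.continuous)).sub (cont_deriv2H.mul hGdiff.continuous)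
  set w : ℝ → ℝ := fun y => G y / deriv H y with hwdef
  have hw : ∀ t, HasDerivAt w (F1 t / (deriv H t) ^ 2) t := fun t =>
    w_hasDerivAt G hGdiff t
  rw [NormedAddCommGroup.tendsto_nhds_zero] at hbd ⊢
  intro ε hε
  have hbd' := eventually_atBot.mp (hbd (ε/8) (by positivity))
  obtain ⟨N₀, hN₀⟩ := hbd'
  set x₀ := min N₀ 0 with hx₀def
  have hx₀ : x₀ ≤ (0:ℝ) := min_le_right _ _
  have hsmall : ∀ t, t ≤ x₀ → |F1 t| ≤ ε/8 := by
    intro t ht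
    have h := hN₀ t (le_trans ht (min_le_left _ _))
    rw [Real.norm_eq_abs] at h
    exact h.le
  set C := |w x₀| with hCdef
  have hwbound : ∀ x, x ≤ x₀ → |w x| ≤ C + ε/8*Real.sqrt 2 * Real.exp (-(2*Real.sqrt 2)*x) := by
    intro x hx
    have hcont_integrand : Continuous (fun t => F1 t / (deriv H t) ^ 2) :=
      hcontF1.div (cont_derivH.pow 2) (fun t => pow_ne_zero 2 (derivH_pos t).ne')
    have hftc : w x₀ - w x = ∫ t in x..x₀, F1 t / (deriv H t) ^ 2 :=
      (intervalIntegral.integral_eq_sub_of_hasDerivAt (fun t _ => hw t)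
        (hcont_integrand.intervalIntegrable _ _)).symm
    have hbound : ‖∫ t in x..x₀, F1 t / (deriv H t) ^ 2‖
        ≤ |∫ t in x..x₀, ε/8 * (4 * Real.exp (-(2*Real.sqrt 2)*t))| := by
      apply intervalIntegral.norm_integral_le_abs_of_norm_le
      · filter_upwards [ae_restrict_mem measurableSet_uIoc] with t ht
        rw [Set.uIoc_of_le hx] at ht
        have ht0 : t ≤ (0:ℝ) := le_trans ht.2 hx₀
        have hp := p_lb_bot t ht0
        have hq : (0:ℝ) < Real.exp (Real.sqrt 2 * t) := Real.exp_pos _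
        have hqq : Real.exp (-(2*Real.sqrt 2)*t) * Real.exp (Real.sqrt 2 * t) ^ 2 = 1 := by
          rw [sq, ← Real.exp_add, ← Real.exp_add,
            show -(2*Real.sqrt 2)*t + (Real.sqrt 2 * t + Real.sqrt 2 * t) = 0 by ring,
            Real.exp_zero]
        have hF1t := hsmall t ht.2
        have hppos := derivH_pos t
        rw [Real.norm_eq_abs, abs_div, abs_of_pos (pow_pos hppos 2), div_le_iff₀ (pow_pos hppos 2)]
        have hp2 : Real.exp (Real.sqrt 2 * t) ^ 2 / 4 ≤ (deriv H t) ^ 2 := by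
          nlinarith
        nlinarith [abs_nonneg (F1 t), Real.exp_pos (-(2*Real.sqrt 2)*t), mul_le_mul_of_nonneg_left hp2
          (show (0:ℝ) ≤ ε/8 * (4 * Real.exp (-(2*Real.sqrt 2)*t)) by positivity)]
      · exact (continuous_const.mul (continuous_const.mul
          ((continuous_const.mul continuous_id).rexp))).intervalIntegrable _ _
    have hev : ∫ t in x..x₀, ε/8 * (4 * Real.exp (-(2*Real.sqrt 2)*t))
        = (-(ε/8*Real.sqrt 2) * Real.exp (-(2*Real.sqrt 2)*x₀))
          - (-(ε/8*Real.sqrt 2) * Real.exp (-(2*Real.sqrt 2)*x)) := by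
      have hAder : ∀ t : ℝ, HasDerivAt (fun t => -(ε/8*Real.sqrt 2) * Real.exp (-(2*Real.sqrt 2)*t))
          (ε/8 * (4 * Real.exp (-(2*Real.sqrt 2)*t))) t := by
        intro t
        have h := (((hasDerivAt_id t).const_mul (-(2*Real.sqrt 2))).exp).const_mul
          (-(ε/8*Real.sqrt 2))
        simp only [id_eq] at h
        refine h.congr_deriv (Eq.symm ?_)
        linear_combination (-(ε/4) * Real.exp (-(2*Real.sqrt 2)*t)) * s_sq
      rw [intervalIntegral.integral_eq_sub_of_hasDerivAt (fun t _ => hAder t)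
        ((continuous_const.mul (continuous_const.mul
          ((continuous_const.mul continuous_id).rexp))).intervalIntegrable _ _)]
    have h1 : |w x₀ - w x| ≤ ε/8*Real.sqrt 2 * Real.exp (-(2*Real.sqrt 2)*x) := by
      rw [hftc]
      calc ‖∫ t in x..x₀, F1 t / (deriv H t) ^ 2‖
          ≤ |∫ t in x..x₀, ε/8 * (4 * Real.exp (-(2*Real.sqrt 2)*t))| := hbound
        _ ≤ ε/8*Real.sqrt 2 * Real.exp (-(2*Real.sqrt 2)*x) := by
            rw [hev, abs_of_nonneg]
            · have : Real.exp (-(2*Real.sqrt 2)*x₀) > 0 := Real.exp_pos _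
              have hc : (0:ℝ) ≤ ε/8*Real.sqrt 2 := by positivity
              nlinarith
            · have hle : Real.exp (-(2*Real.sqrt 2)*x₀) ≤ Real.exp (-(2*Real.sqrt 2)*x) :=
                Real.exp_le_exp.mpr (by nlinarith [s_pos])
              have hc : (0:ℝ) ≤ ε/8*Real.sqrt 2 := by positivity
              nlinarith
    calc |w x| ≤ |w x₀| + |w x₀ - w x| := by
          have h := abs_sub_abs_le_abs_sub (w x) (w x₀)
          have h2 := abs_sub_comm (w x) (w x₀)
          linarith [abs_nonneg (w x₀)]
      _ ≤ C + ε/8*Real.sqrt 2 * Real.exp (-(2*Real.sqrt 2)*x) := by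
          rw [hCdef]; linarith
  have hterm : Tendsto (fun x => 2*Real.sqrt 2*C*(Real.exp (Real.sqrt 2*x))^3)
      atBot (nhds 0) := by
    have h1 : Tendsto (fun x : ℝ => Real.sqrt 2 * x) atBot atBot :=
      Tendsto.const_mul_atBot s_pos tendsto_id
    have h2 := Real.tendsto_exp_atBot.comp h1
    have h4 : Tendsto (fun x : ℝ => Real.exp (Real.sqrt 2 * x)) atBot (nhds 0) := h2
    have h5 := (h4.pow 3).const_mul (2*Real.sqrt 2*C)
    simpa using h5
  rw [NormedAddCommGroup.tendsto_nhds_zero] at hterm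
  have hterm' := eventually_atBot.mp (hterm (ε/2) (by positivity))
  obtain ⟨N₁, hN₁⟩ := hterm'
  rw [eventually_atBot]
  refine ⟨min N₁ x₀, fun x hx => ?_⟩
  have hx1 : x ≤ N₁ := le_trans hx (min_le_left _ _)
  have hx2 : x ≤ x₀ := le_trans hx (min_le_right _ _)
  have hx0 : x ≤ (0:ℝ) := le_trans hx2 hx₀
  rw [Real.norm_eq_abs]
  have hppos := derivH_pos x
  have hGx : G x = w x * deriv H x := by
    rw [hwdef]; field_simp
  have habs : |(deriv H x) ^ 2 * G x| = (deriv H x) ^ 3 * |w x| := by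
    rw [hGx, abs_mul, abs_mul, abs_of_pos hppos, abs_of_pos (pow_pos hppos 2)]
    ring
  have hub := p_ub_bot x
  have hwb := hwbound x hx2
  have hterm1 : 2*Real.sqrt 2*C*(Real.exp (Real.sqrt 2*x))^3 < ε/2 := by
    have h := hN₁ x hx1
    rw [Real.norm_eq_abs] at h
    calc 2*Real.sqrt 2*C*(Real.exp (Real.sqrt 2*x))^3
        ≤ |2*Real.sqrt 2*C*(Real.exp (Real.sqrt 2*x))^3| := le_abs_self _
      _ < ε/2 := h
  have hexp1 : (Real.exp (Real.sqrt 2*x))^3 * Real.exp (-(2*Real.sqrt 2)*x)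
      = Real.exp (Real.sqrt 2*x) := by
    rw [pow_succ, sq, ← Real.exp_add, ← Real.exp_add,
      ← Real.exp_add]
    congr 1
    ring
  have hexp2 : Real.exp (Real.sqrt 2*x) ≤ 1 := by
    rw [show (1:ℝ) = Real.exp 0 by simp]
    exact Real.exp_le_exp.mpr (by nlinarith [s_pos])
  have hp3 : (deriv H x) ^ 3 ≤ 2*Real.sqrt 2*(Real.exp (Real.sqrt 2*x))^3 := by
    have h := pow_le_pow_left₀ hppos.le hub 3
    calc (deriv H x) ^ 3 ≤ (Real.sqrt 2 * Real.exp (Real.sqrt 2*x))^3 := h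
      _ = 2*Real.sqrt 2*(Real.exp (Real.sqrt 2*x))^3 := by
          rw [mul_pow, pow_succ, s_sq]
          try ring
  have hwnonneg : (0:ℝ) ≤ |w x| := abs_nonneg _
  have hCnonneg : (0:ℝ) ≤ C := abs_nonneg _
  calc |(deriv H x) ^ 2 * G x| = (deriv H x) ^ 3 * |w x| := habs
    _ ≤ (2*Real.sqrt 2*(Real.exp (Real.sqrt 2*x))^3)
        * (C + ε/8*Real.sqrt 2 * Real.exp (-(2*Real.sqrt 2)*x)) := by
        apply mul_le_mul hp3 hwb hwnonneg
        positivity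
    _ = 2*Real.sqrt 2*C*(Real.exp (Real.sqrt 2*x))^3
        + 2*Real.sqrt 2*(ε/8*Real.sqrt 2)
          * ((Real.exp (Real.sqrt 2*x))^3 * Real.exp (-(2*Real.sqrt 2)*x)) := by ring
    _ = 2*Real.sqrt 2*C*(Real.exp (Real.sqrt 2*x))^3
        + (ε/2) * Real.exp (Real.sqrt 2*x) := by
        rw [hexp1]
        linear_combination (ε/4 * Real.exp (Real.sqrt 2*x)) * s_sq
    _ < ε/2 + ε/2 := by
        have h3 : (ε/2) * Real.exp (Real.sqrt 2*x) ≤ ε/2 * 1 := by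
          apply mul_le_mul_of_nonneg_left hexp2 (by positivity)
        nlinarith
    _ = ε := by linarith

lemma abs_one_sub_three_H_sq (x : ℝ) : |1 - 3 * H x ^ 2| ≤ 3 := by
  have h1 := H_pos x
  have h2 := H_lt_one x
  rw [abs_le]
  constructor <;> nlinarith

theorem integral_identity_from_ODE (G : ℝ → ℝ) (hG : ContDiff ℝ 2 G)
    (hode : ∀ x : ℝ,
      -(deriv (deriv G) x) + deriv (deriv U) (H x) * G x =
        (deriv (deriv U) (H x) - 2) * Real.exp (-(Real.sqrt 2) * x) +
          8 * Real.sqrt 2 * deriv H x)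
    (hint1 : Integrable (fun x => deriv (deriv (deriv U)) (H x) * (deriv H x) ^ 2 * G x))
    (hint2 : Integrable (fun x =>
      deriv U (H x) * (deriv (deriv U) (H x) - 2) * Real.exp (-(Real.sqrt 2) * x)))
    (hbd_top : Tendsto (fun x => deriv H x * deriv G x - deriv (deriv H) x * G x)
      atTop (nhds 0))
    (hbd_bot : Tendsto (fun x => deriv H x * deriv G x - deriv (deriv H) x * G x)
      atBot (nhds 0)) :
    ∫ x : ℝ, deriv (deriv (deriv U)) (H x) * (deriv H x) ^ 2 * G x =
      -∫ x : ℝ, deriv U (H x) * (deriv (deriv U) (H x) - 2) *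
        Real.exp (-(Real.sqrt 2) * x) := by
  set f : ℝ → ℝ := fun x => deriv (deriv (deriv U)) (H x) * (deriv H x) ^ 2 * G x with hfdef
  set g : ℝ → ℝ := fun x => deriv U (H x) * (deriv (deriv U) (H x) - 2) *
    Real.exp (-(Real.sqrt 2) * x) with hgdef
  set Φ : ℝ → ℝ := fun y => -(Real.sqrt 2 * (1 - 3 * H y ^ 2) *
      (deriv H y * deriv G y - deriv (deriv H) y * G y))
      - 6 * Real.sqrt 2 * H y * (deriv H y) ^ 2 * G y
      - 4 * Real.sqrt 2 * (deriv H y) ^ 2 with hΦdef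
  have hderiv : ∀ x, HasDerivAt Φ (f x + g x) x := fun x => Phi_hasDerivAt G hG hode x
  have hfg : Integrable (fun x => f x + g x) := hint1.add hint2
  -- limits of Φ
  have hT1top : Tendsto (fun y => Real.sqrt 2 * (1 - 3 * H y ^ 2) *
      (deriv H y * deriv G y - deriv (deriv H) y * G y)) atTop (nhds 0) := by
    apply squeeze_zero_norm (a := fun y => 3 * Real.sqrt 2 *
      ‖deriv H y * deriv G y - deriv (deriv H) y * G y‖)
    · intro y
      rw [norm_mul, Real.norm_eq_abs (Real.sqrt 2 * (1 - 3 * H y ^ 2)), abs_mul,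
        abs_of_pos s_pos]
      have h := abs_one_sub_three_H_sq y
      have hn : (0:ℝ) ≤ ‖deriv H y * deriv G y - deriv (deriv H) y * G y‖ := norm_nonneg _
      nlinarith [mul_le_mul_of_nonneg_left (mul_le_mul_of_nonneg_right h hn) s_pos.le]
    · simpa using hbd_top.norm.const_mul (3 * Real.sqrt 2)
  have hT1bot : Tendsto (fun y => Real.sqrt 2 * (1 - 3 * H y ^ 2) *
      (deriv H y * deriv G y - deriv (deriv H) y * G y)) atBot (nhds 0) := by
    apply squeeze_zero_norm (a := fun y => 3 * Real.sqrt 2 *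
      ‖deriv H y * deriv G y - deriv (deriv H) y * G y‖)
    · intro y
      rw [norm_mul, Real.norm_eq_abs (Real.sqrt 2 * (1 - 3 * H y ^ 2)), abs_mul,
        abs_of_pos s_pos]
      have h := abs_one_sub_three_H_sq y
      have hn : (0:ℝ) ≤ ‖deriv H y * deriv G y - deriv (deriv H) y * G y‖ := norm_nonneg _
      nlinarith [mul_le_mul_of_nonneg_left (mul_le_mul_of_nonneg_right h hn) s_pos.le]
    · simpa using hbd_bot.norm.const_mul (3 * Real.sqrt 2)
  have hT2top : Tendsto (fun y => 6 * Real.sqrt 2 * H y * (deriv H y) ^ 2 * G y)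
      atTop (nhds 0) := by
    apply squeeze_zero_norm (a := fun y => 6 * Real.sqrt 2 * ‖(deriv H y) ^ 2 * G y‖)
    · intro y
      have h1 := H_pos y
      have h2 := H_lt_one y
      have heq : (6 : ℝ) * Real.sqrt 2 * H y * (deriv H y) ^ 2 * G y
          = (6 * Real.sqrt 2 * H y) * ((deriv H y) ^ 2 * G y) := by ring
      rw [heq, norm_mul, Real.norm_eq_abs (6 * Real.sqrt 2 * H y),
        abs_of_pos (by positivity)]
      have hn : (0:ℝ) ≤ ‖(deriv H y) ^ 2 * G y‖ := norm_nonneg _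
      nlinarith [mul_le_mul_of_nonneg_left (mul_le_mul_of_nonneg_right h2.le hn)
        (show (0:ℝ) ≤ 6 * Real.sqrt 2 by positivity)]
    · simpa using (key_top G hG hbd_top).norm.const_mul (6 * Real.sqrt 2)
  have hT2bot : Tendsto (fun y => 6 * Real.sqrt 2 * H y * (deriv H y) ^ 2 * G y)
      atBot (nhds 0) := by
    apply squeeze_zero_norm (a := fun y => 6 * Real.sqrt 2 * ‖(deriv H y) ^ 2 * G y‖)
    · intro y
      have h1 := H_pos y
      have h2 := H_lt_one y
      have heq : (6 : ℝ) * Real.sqrt 2 * H y * (deriv H y) ^ 2 * G y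
          = (6 * Real.sqrt 2 * H y) * ((deriv H y) ^ 2 * G y) := by ring
      rw [heq, norm_mul, Real.norm_eq_abs (6 * Real.sqrt 2 * H y),
        abs_of_pos (by positivity)]
      have hn : (0:ℝ) ≤ ‖(deriv H y) ^ 2 * G y‖ := norm_nonneg _
      nlinarith [mul_le_mul_of_nonneg_left (mul_le_mul_of_nonneg_right h2.le hn)
        (show (0:ℝ) ≤ 6 * Real.sqrt 2 by positivity)]
    · simpa using (key_bot G hG hbd_bot).norm.const_mul (6 * Real.sqrt 2)
  have hT3top : Tendsto (fun y => 4 * Real.sqrt 2 * (deriv H y) ^ 2) atTop (nhds 0) := by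
    have h := (tendsto_p_top.pow 2).const_mul (4 * Real.sqrt 2)
    simpa using h
  have hT3bot : Tendsto (fun y => 4 * Real.sqrt 2 * (deriv H y) ^ 2) atBot (nhds 0) := by
    have h := (tendsto_p_bot.pow 2).const_mul (4 * Real.sqrt 2)
    simpa using h
  have hΦtop : Tendsto Φ atTop (nhds 0) := by
    have h := (hT1top.neg.sub hT2top).sub hT3top
    simpa using h
  have hΦbot : Tendsto Φ atBot (nhds 0) := by
    have h := (hT1bot.neg.sub hT2bot).sub hT3bot
    simpa using h
  have hIoi : ∫ x in Set.Ioi (0:ℝ), (f x + g x) = 0 - Φ 0 :=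
    integral_Ioi_of_hasDerivAt_of_tendsto' (fun x _ => hderiv x)
      hfg.integrableOn hΦtop
  have hIic : ∫ x in Set.Iic (0:ℝ), (f x + g x) = Φ 0 - 0 :=
    integral_Iic_of_hasDerivAt_of_tendsto' (fun x _ => hderiv x)
      hfg.integrableOn hΦbot
  have hsplit := intervalIntegral.integral_Iic_add_Ioi (b := (0:ℝ))
    hfg.integrableOn hfg.integrableOn
  have htotal : ∫ x : ℝ, (f x + g x) = 0 := by
    rw [← hsplit, hIoi, hIic]
    ring
  rw [integral_add hint1 hint2] at htotal
  linarith
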